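/- arXiv:2605.17930 — 2 statements merged into one kernel-verified Lean document; each statement's English description precedes it below -/
import Mathlib

section
/- Fix integers m ≥ 1, n ≥ 1 and real ε with 0 < ε < 1/(64m). Set Δ = 4ε, N = ⌊1/(16mε)⌋, and η = 4m·N^{-m/(n+1)}. If N is large enough that (N^{m/(n+1)}/4 + 1)^{n+1} < N^m, then for any functions a : [0,1] → [0,1]^n and b : [0,1] → (0,1], among the N^m grid sequences z ∈ G₁ × ⋯ × G_m (where G_j = {(j-1)/(2m) + qΔ : q = 1,…,N}) there exist two distinct sequences z ≠ z' with ‖∑_j a(z_j) - ∑_j a(z'_j)‖_∞ ≤ η and |∑_j b(z_j) - ∑_j b(z'_j)| ≤ η. -/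
/-- If two nonnegative reals have the same `η`-bucket (nat floor of `·/η`), they are
within `η` of each other. -/
lemma floor_eq_close (η s s' : ℝ) (hη : 0 < η) (hs : 0 ≤ s) (hs' : 0 ≤ s')
    (h : ⌊s / η⌋₊ = ⌊s' / η⌋₊) : |s - s'| ≤ η := by
  have h1 := Nat.lt_floor_add_one (s / η)
  have h2 := Nat.floor_le (show (0:ℝ) ≤ s / η by positivity)
  have h3 := Nat.lt_floor_add_one (s' / η)
  have h4 := Nat.floor_le (show (0:ℝ) ≤ s' / η by positivity)
  rw [h] at h1 h2
  have hu : |s / η - s' / η| ≤ 1 := by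
    rw [abs_sub_le_iff]; constructor <;> nlinarith
  rw [div_sub_div_same, abs_div, abs_of_pos hη] at hu
  exact (div_le_one hη).mp hu

/-- Pigeonhole over grid sequences: among the `N^m` grid sequences there exist two
distinct ones whose `a`-sums are `η`-close in sup norm and whose `b`-sums are
`η`-close. -/
theorem stmt3 (m n : ℕ) (hm : 1 ≤ m) (hn : 1 ≤ n)
    (ε : ℝ) (hε : 0 < ε) (hε' : ε < 1 / (64 * m))
    (Δ : ℝ) (hΔ : Δ = 4 * ε)
    (N : ℕ) (hN : N = ⌊1 / (16 * m * ε)⌋₊)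
    (η : ℝ) (hηdef : η = 4 * m * (N : ℝ) ^ (-(m : ℝ) / ((n : ℝ) + 1)))
    (hbig : ((N : ℝ) ^ ((m : ℝ) / ((n : ℝ) + 1)) / 4 + 1) ^ (n + 1) < (N : ℝ) ^ m)
    (a : ℝ → Fin n → ℝ) (ha : ∀ x i, a x i ∈ Set.Icc (0:ℝ) 1)
    (b : ℝ → ℝ) (hb : ∀ x, b x ∈ Set.Ioc (0:ℝ) 1) :
    ∃ z z' : Fin m → ℝ, z ≠ z' ∧
      (∀ j : Fin m, ∃ q ∈ Finset.Icc 1 N, z j = (j : ℝ) / (2 * m) + q * Δ) ∧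
      (∀ j : Fin m, ∃ q ∈ Finset.Icc 1 N, z' j = (j : ℝ) / (2 * m) + q * Δ) ∧
      (∀ i, |(∑ j, a (z j) i) - ∑ j, a (z' j) i| ≤ η) ∧
      |(∑ j, b (z j)) - ∑ j, b (z' j)| ≤ η := by
  -- N ≥ 1
  have hN1 : 1 ≤ N := by
    by_contra h
    push_neg at h
    have h0 : N = 0 := by omega
    subst h0
    have he : (m : ℝ) / ((n : ℝ) + 1) ≠ 0 := by
      have : (0:ℝ) < m := by exact_mod_cast hm
      have : (0:ℝ) < (n:ℝ) + 1 := by positivity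
      positivity
    rw [Nat.cast_zero, Real.zero_rpow he] at hbig
    rw [zero_pow (by omega : m ≠ 0)] at hbig
    norm_num at hbig
  have hNpos : (0:ℝ) < N := by exact_mod_cast hN1
  have hmpos : (0:ℝ) < m := by exact_mod_cast hm
  set e : ℝ := (m : ℝ) / ((n : ℝ) + 1) with he
  have hepos : 0 < e := by
    have : (0:ℝ) < (n:ℝ) + 1 := by positivity
    positivity
  have hrpos : (0:ℝ) < (N:ℝ) ^ e := Real.rpow_pos_of_pos hNpos e
  have hηpos : 0 < η := by
    rw [hηdef]
    have : (0:ℝ) < (N : ℝ) ^ (-(m : ℝ) / ((n : ℝ) + 1)) :=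
      Real.rpow_pos_of_pos hNpos _
    positivity
  -- m / η = N^e / 4
  have hmη : (m:ℝ) / η = (N:ℝ) ^ e / 4 := by
    rw [hηdef, neg_div, Real.rpow_neg (le_of_lt hNpos), ← he]
    field_simp
  have hΔpos : 0 < Δ := by rw [hΔ]; linarith
  -- buckets
  set K : ℕ := ⌊(m:ℝ) / η⌋₊ with hK
  -- card bound in ℕ
  have hcard : (K + 1) ^ (n + 1) < N ^ m := by
    have h1 : ((K:ℝ) + 1) ^ (n + 1) ≤ ((m:ℝ) / η + 1) ^ (n + 1) := by
      have : (K:ℝ) ≤ (m:ℝ) / η := Nat.floor_le (by positivity)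
      gcongr <;> first | positivity | linarith
    rw [hmη] at h1
    have h2 : ((K:ℝ) + 1) ^ (n + 1) < (N:ℝ) ^ m := lt_of_le_of_lt h1 hbig
    exact_mod_cast h2
  -- source and target finsets
  set S : Finset (Fin m → ℕ) := Fintype.piFinset fun _ => Finset.Icc 1 N with hS
  set T : Finset ((Fin n → ℕ) × ℕ) :=
    (Fintype.piFinset fun _ : Fin n => Finset.range (K + 1)) ×ˢ Finset.range (K + 1) with hT
  -- the grid point map
  set Z : (Fin m → ℕ) → (Fin m → ℝ) := fun q j => (j : ℝ) / (2 * m) + (q j) * Δ with hZ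
  -- bucket map
  set F : (Fin m → ℕ) → (Fin n → ℕ) × ℕ := fun q =>
    (fun i => ⌊(∑ j, a (Z q j) i) / η⌋₊, ⌊(∑ j, b (Z q j)) / η⌋₊) with hF
  have hSa : ∀ q : Fin m → ℕ, ∀ i, (0 ≤ ∑ j, a (Z q j) i) ∧ (∑ j, a (Z q j) i) ≤ m := by
    intro q i
    constructor
    · exact Finset.sum_nonneg fun j _ => (ha _ i).1
    · calc (∑ j, a (Z q j) i) ≤ ∑ _j : Fin m, (1:ℝ) :=
            Finset.sum_le_sum fun j _ => (ha _ i).2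
        _ = m := by simp
  have hSb : ∀ q : Fin m → ℕ, (0 ≤ ∑ j, b (Z q j)) ∧ (∑ j, b (Z q j)) ≤ m := by
    intro q
    constructor
    · exact Finset.sum_nonneg fun j _ => le_of_lt (hb _).1
    · calc (∑ j, b (Z q j)) ≤ ∑ _j : Fin m, (1:ℝ) :=
            Finset.sum_le_sum fun j _ => (hb _).2
        _ = m := by simp
  have hmaps : ∀ q ∈ S, F q ∈ T := by
    intro q _
    rw [hT, Finset.mem_product]
    constructor
    · rw [Fintype.mem_piFinset]
      intro i
      rw [Finset.mem_range, Nat.lt_succ_iff]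
      exact Nat.floor_le_floor ((div_le_div_iff_of_pos_right hηpos).mpr (hSa q i).2)
    · rw [Finset.mem_range, Nat.lt_succ_iff]
      exact Nat.floor_le_floor ((div_le_div_iff_of_pos_right hηpos).mpr (hSb q).2)
  have hcards : T.card < S.card := by
    rw [hS, hT]
    simp only [Finset.card_product, Fintype.card_piFinset, Finset.card_range,
      Nat.card_Icc, Finset.prod_const, Finset.card_univ, Fintype.card_fin]
    calc (K + 1) ^ n * (K + 1) = (K + 1) ^ (n + 1) := by ring
      _ < N ^ m := hcard
      _ = (N + 1 - 1) ^ m := by norm_num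
  obtain ⟨q, hq, q', hq', hne, heq⟩ :=
    Finset.exists_ne_map_eq_of_card_lt_of_maps_to hcards hmaps
  rw [hS, Fintype.mem_piFinset] at hq hq'
  refine ⟨Z q, Z q', ?_, fun j => ⟨q j, hq j, rfl⟩, fun j => ⟨q' j, hq' j, rfl⟩, ?_, ?_⟩
  · intro hzz
    apply hne
    funext j
    have := congrFun hzz j
    simp only [hZ] at this
    have h3 : ((q j : ℝ)) * Δ = (q' j : ℝ) * Δ := by linarith
    have : ((q j : ℝ)) = (q' j : ℝ) := by
      field_simp at h3
      linarith
    exact_mod_cast this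
  · intro i
    have hfi : ⌊(∑ j, a (Z q j) i) / η⌋₊ = ⌊(∑ j, a (Z q' j) i) / η⌋₊ := by
      have := congrFun (congrArg Prod.fst heq) i
      simpa [hF] using this
    exact floor_eq_close η _ _ hηpos (hSa q i).1 (hSa q' i).1 hfi
  · have hfb : ⌊(∑ j, b (Z q j)) / η⌋₊ = ⌊(∑ j, b (Z q' j)) / η⌋₊ := by
      have := congrArg Prod.snd heq
      simpa [hF] using this
    exact floor_eq_close η _ _ hηpos (hSb q).1 (hSb q').1 hfb
end

section
/- Let H(x) = 1 if x ≥ 0 and H(x) = 0 otherwise. Let a < 0 < b and let μ be a finite positive measure on [a, b], and fix p ≥ 1 and δ > 0. Then there exist real numbers A, B, C, D such that the function x ↦ A·tanh(Bx + C) + D satisfies ‖H - (A·tanh(B·+C) + D)‖_{L^p(μ)} < δ. -/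
open MeasureTheory Filter
open scoped NNReal ENNReal

private lemma tanh_eq' (x : ℝ) :
    Real.tanh x = (1 - Real.exp (-2 * x)) / (1 + Real.exp (-2 * x)) := by
  have h1 : Real.exp (-2 * x) = Real.exp (-x) * Real.exp (-x) := by
    rw [← Real.exp_add]; ring_nf
  have h2 : Real.exp (-x) * Real.exp x = 1 := by
    rw [← Real.exp_add]; simp
  rw [Real.tanh_eq_sinh_div_cosh, Real.sinh_eq, Real.cosh_eq, h1]
  have hx := Real.exp_pos x
  have hx' := Real.exp_pos (-x)
  field_simp
  nlinarith [h2]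

private lemma abs_tanh_le_one (x : ℝ) : |Real.tanh x| ≤ 1 := by
  rw [tanh_eq']
  have h := Real.exp_pos (-2 * x)
  rw [abs_div, abs_of_pos (by linarith : (0:ℝ) < 1 + Real.exp (-2 * x)),
    div_le_one (by linarith)]
  rcases abs_cases (1 - Real.exp (-2 * x)) with ⟨h1, _⟩ | ⟨h1, _⟩ <;> linarith

private lemma tendsto_tanh_atTop : Tendsto Real.tanh atTop (nhds 1) := by
  have h2 : Tendsto (fun x : ℝ => -2 * x) atTop atBot := by
    have := tendsto_neg_atTop_atBot.comp
      (Tendsto.const_mul_atTop (show (0:ℝ) < 2 by norm_num) tendsto_id)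
    exact this.congr fun x => by simp [Function.comp]
  have h : Tendsto (fun x : ℝ => Real.exp (-2 * x)) atTop (nhds 0) :=
    Real.tendsto_exp_atBot.comp h2
  have hd : Tendsto (fun x : ℝ => (1 - Real.exp (-2 * x)) / (1 + Real.exp (-2 * x)))
      atTop (nhds ((1 - 0) / (1 + 0))) :=
    Tendsto.div (tendsto_const_nhds.sub h) (tendsto_const_nhds.add h) (by norm_num)
  have := hd.congr fun x => (tanh_eq' x).symm
  simpa using this

private lemma tendsto_tanh_atBot : Tendsto Real.tanh atBot (nhds (-1)) := by
  have h0 := tendsto_tanh_atTop.comp tendsto_neg_atBot_atTop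
  have h2 : Tendsto (fun x : ℝ => -Real.tanh x) atBot (nhds 1) :=
    h0.congr fun x => by simp [Function.comp, Real.tanh_neg]
  simpa using h2.neg

/-- The Heaviside function can be approximated in `L^p(μ)` by `A·tanh(Bx+C)+D`
for any finite measure `μ` on `[a,b]` with `a < 0 < b`. -/
theorem stmt5 (a b : ℝ) (ha : a < 0) (hb : 0 < b)
    (μ : Measure ℝ) [IsFiniteMeasure μ] (hμ : μ (Set.Icc a b)ᶜ = 0)
    (p : ℝ) (hp : 1 ≤ p) (δ : ℝ) (hδ : 0 < δ) :
    ∃ A B C D : ℝ,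
      eLpNorm (fun x => (if 0 ≤ x then (1:ℝ) else 0)
          - (A * Real.tanh (B * x + C) + D)) (ENNReal.ofReal p) μ
        < ENNReal.ofReal δ := by
  set q : ENNReal := ENNReal.ofReal p with hq
  have hq1 : 1 ≤ q := by
    rw [hq]; exact_mod_cast (ENNReal.one_le_ofReal).mpr hp
  have hq_top : q ≠ ⊤ := ENNReal.ofReal_ne_top
  set g : ℝ → ℝ := fun x => if 0 ≤ x then (1:ℝ) else 0 with hg
  set f : ℕ → ℝ → ℝ := fun n x =>
    (1/2 : ℝ) * Real.tanh ((n:ℝ)^2 * x + n) + 1/2 with hf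
  -- measurability
  have htanh_cont : Continuous Real.tanh := by
    have : Real.tanh = fun x => (1 - Real.exp (-2 * x)) / (1 + Real.exp (-2 * x)) := by
      funext x; exact tanh_eq' x
    rw [this]
    apply Continuous.div
    · continuity
    · continuity
    · intro x; have := Real.exp_pos (-2 * x); positivity
  have hfmeas : ∀ n, StronglyMeasurable (f n) := by
    intro n
    apply Continuous.stronglyMeasurable
    exact (continuous_const.mul (htanh_cont.comp
      ((continuous_const.mul continuous_id).add continuous_const))).add continuous_const
  have hgmeas : AEStronglyMeasurable g μ := by
    apply Measurable.aestronglyMeasurable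
    exact (measurable_const.ite (measurableSet_le measurable_const measurable_id) measurable_const)
  have hgbd : ∀ x, ‖g x‖ ≤ 1 := by
    intro x; rw [hg]; dsimp only; split <;> simp
  have hgmem : MemLp g q μ := MemLp.of_bound hgmeas 1 (Eventually.of_forall hgbd)
  have hfbd : ∀ n x, ‖f n x‖ ≤ 1 := by
    intro n x
    rw [hf]; dsimp only
    have := abs_tanh_le_one ((n:ℝ)^2 * x + n)
    rw [Real.norm_eq_abs]
    rcases abs_cases (Real.tanh ((n:ℝ)^2 * x + n)) with ⟨h1, _⟩ | ⟨h1, _⟩ <;>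
      rcases abs_cases ((1/2 : ℝ) * Real.tanh ((n:ℝ)^2 * x + n) + 1/2) with ⟨h2, _⟩ | ⟨h2, _⟩ <;>
      linarith
  -- uniform integrability of the (uniformly bounded) family
  have hui : UnifIntegrable f q μ := by
    apply unifIntegrable_of' hq1 hq_top hfmeas
    intro ε hε
    refine ⟨2, by norm_num, fun i => ?_⟩
    have hempty : { x : ℝ | (2:ℝ≥0) ≤ ‖f i x‖₊ } = ∅ := by
      ext x
      simp only [Set.mem_setOf_eq, Set.mem_empty_iff_false, iff_false, not_le]
      have := hfbd i x
      have : ‖f i x‖₊ ≤ 1 := by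
        rw [← NNReal.coe_le_coe, coe_nnnorm]; simpa using this
      calc (‖f i x‖₊ : ℝ≥0) ≤ 1 := this
        _ < 2 := by norm_num
    rw [hempty]
    simp [eLpNorm_zero]
  -- pointwise convergence
  have hptwise : ∀ x, Tendsto (fun n => f n x) atTop (nhds (g x)) := by
    intro x
    rcases le_or_gt 0 x with hx | hx
    · have harg : Tendsto (fun n : ℕ => (n:ℝ)^2 * x + n) atTop atTop := by
        apply tendsto_atTop_mono (fun n : ℕ => le_add_of_nonneg_left (by positivity))
        exact tendsto_natCast_atTop_atTop
      have := (tendsto_tanh_atTop.comp harg).const_mul (1/2 : ℝ) |>.add_const (1/2 : ℝ)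
      rw [hg]; simp only [hx, if_pos]
      convert this using 2
      all_goals norm_num [hf]
    · have harg : Tendsto (fun n : ℕ => (n:ℝ)^2 * x + n) atTop atBot := by
        have key : ∀ᶠ n : ℕ in atTop, (n:ℝ)^2 * x + n ≤ -(n:ℝ) + 2/(-x) := by
          filter_upwards [eventually_ge_atTop (Nat.ceil (2/(-x)))] with n hn
          have hx' : 0 < -x := by linarith
          have hn' : 2/(-x) ≤ (n:ℝ) := le_trans (Nat.le_ceil _) (by exact_mod_cast hn)
          have h2 : 2 ≤ (n:ℝ) * (-x) := by
            rw [div_le_iff₀ hx'] at hn'; linarith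
          have h3 : 0 ≤ (n:ℝ) * ((n:ℝ) * (-x) - 2) :=
            mul_nonneg (Nat.cast_nonneg n) (by linarith)
          have h4 : 0 < 2 / (-x) := by positivity
          nlinarith [h3, h4]
        apply tendsto_atBot_mono' _ key
        apply Tendsto.atBot_add _ tendsto_const_nhds
        exact tendsto_neg_atBot_iff.mpr tendsto_natCast_atTop_atTop
      have := (tendsto_tanh_atBot.comp harg).const_mul (1/2 : ℝ) |>.add_const (1/2 : ℝ)
      rw [hg]; simp only [not_le.mpr hx, if_neg]
      convert this using 2
      all_goals norm_num [hf]
  -- Lp convergence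
  have hLp : Tendsto (fun n => eLpNorm (f n - g) q μ) atTop (nhds 0) :=
    tendsto_Lp_finite_of_tendsto_ae hq1 hq_top
      (fun n => (hfmeas n).aestronglyMeasurable) hgmem hui
      (Eventually.of_forall hptwise)
  have hδ' : (0:ℝ≥0∞) < ENNReal.ofReal δ := ENNReal.ofReal_pos.mpr hδ
  obtain ⟨n, hn⟩ := ((hLp.eventually (eventually_lt_nhds hδ')).exists)
  refine ⟨1/2, (n : ℝ)^2, (n : ℝ), 1/2, ?_⟩
  have heq : (fun x => (if 0 ≤ x then (1:ℝ) else 0)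
      - ((1/2:ℝ) * Real.tanh ((n:ℝ)^2 * x + (n:ℝ)) + 1/2)) = g - f n := rfl
  rw [heq, eLpNorm_sub_comm]
  exact hn
end
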